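/- Let Ω be a nonempty open subset of ℝ^{n+1} (n ≥ 1) with nonempty topological boundary ∂Ω, let u(y) = dist(y, ∂Ω), let 0 < s < t, and let y ∈ Γ_s^t with configuration (x, z). Then for every R > 0, the Lebesgue measure of the set ((Ω_s − y)/ρ △ H) ∩ B_R(0) tends to 0 as ρ → 0⁺, where (Ω_s − y)/ρ = {(w − y)/ρ : w ∈ Ω_s} and H = {w ∈ ℝ^{n+1} : ⟨w, x − z⟩ < 0} is the open half-space with inner normal z − x. That is, the blow-ups of Ω_s at y converge in L¹_loc, as characteristic functions, to the half-space [x − z]⁻. -/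

import Mathlib

open RealInnerProductSpace Metric Set MeasureTheory Filter
open scoped symmDiff

section aux

variable {E : Type*} [NormedAddCommGroup E] [InnerProductSpace ℝ E]

lemma expand_sq (a b : ℝ) (ν v : E) :
    ‖a • ν + b • v‖ ^ 2 = a ^ 2 * ‖ν‖ ^ 2 + 2 * (a * b) * ⟪ν, v⟫ + b ^ 2 * ‖v‖ ^ 2 := by
  rw [norm_add_sq_real, inner_smul_left, inner_smul_right, norm_smul, norm_smul]
  simp [mul_pow, sq_abs]
  ring

lemma ball_subset_of_open {Ω : Set E} (hΩ : IsOpen Ω) {z : E} (hz : z ∈ Ω) {r : ℝ}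
    (hr : r ≤ Metric.infDist z (frontier Ω)) : Metric.ball z r ⊆ Ω := by
  have hsub : Metric.ball z r ⊆ Ω ∪ (closure Ω)ᶜ := by
    intro w hw
    by_cases hwΩ : w ∈ Ω
    · exact Or.inl hwΩ
    by_cases hwc : w ∈ closure Ω
    · exfalso
      have hwf : w ∈ frontier Ω := by
        rw [frontier, hΩ.interior_eq]; exact ⟨hwc, hwΩ⟩
      have h1 : Metric.infDist z (frontier Ω) ≤ dist z w := Metric.infDist_le_dist_of_mem hwf
      have h2 : dist w z < r := Metric.mem_ball.1 hw
      rw [dist_comm] at h1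
      linarith
    · exact Or.inr hwc
  rcases le_or_gt r 0 with h | h
  · rw [Metric.ball_eq_empty.2 h]; exact empty_subset _
  · exact IsPreconnected.subset_left_of_subset_union hΩ
      (isClosed_closure.isOpen_compl)
      (disjoint_compl_right.mono_left subset_closure) hsub
      ⟨z, Metric.mem_ball_self h, hz⟩ (convex_ball z r).isPreconnected

end aux

set_option maxHeartbeats 1000000 in
/-- Blow-ups of `Ω_s` at a point `y ∈ Γ_s^t` with configuration `(x, z)` converge in
`L¹_loc`, as characteristic functions, to the half-space `[x - z]⁻`. -/
theorem stmt_8 (n : ℕ) (hn : 1 ≤ n)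
    (Ω : Set (EuclideanSpace ℝ (Fin (n + 1))))
    (hΩopen : IsOpen Ω) (hΩne : Ω.Nonempty) (hfr : (frontier Ω).Nonempty)
    (u : EuclideanSpace ℝ (Fin (n + 1)) → ℝ)
    (hu : ∀ y, u y = Metric.infDist y (frontier Ω))
    (s t : ℝ) (hs : 0 < s) (hst : s < t)
    (y x z : EuclideanSpace ℝ (Fin (n + 1)))
    (hx : x ∈ frontier Ω) (hz : z ∈ Ω) (huz : u z = t) (hxz : ‖x - z‖ = t)
    (hy : y = x + (s / t) • (z - x)) :
    ∀ R > (0 : ℝ),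
      Tendsto
        (fun ρ : ℝ => volume
          ((((fun w => ρ⁻¹ • (w - y)) '' {w | w ∈ Ω ∧ s < u w}) ∆
              {w : EuclideanSpace ℝ (Fin (n + 1)) | ⟪w, x - z⟫ < 0}) ∩
            Metric.ball 0 R))
        (nhdsWithin 0 (Set.Ioi 0)) (nhds 0) := by
  intro R hR
  let E := EuclideanSpace ℝ (Fin (n + 1))
  have ht : (0 : ℝ) < t := hs.trans hst
  have hts : (0 : ℝ) < t - s := by linarith
  set ν : E := z - x with hν
  have hνnorm : ‖ν‖ = t := by rw [hν, ← norm_neg, neg_sub, hxz]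
  have hνne : ν ≠ 0 := by
    intro h; rw [h, norm_zero] at hνnorm; linarith
  -- the constant
  set c : ℝ := t * R ^ 2 / (2 * min s (t - s)) with hc
  have hmin : 0 < min s (t - s) := lt_min hs hts
  have hcpos : 0 < c := by positivity
  have hc1 : t * R ^ 2 / (2 * s) ≤ c := by
    apply div_le_div_of_nonneg_left (by positivity) (by positivity)
    have := min_le_left s (t - s); linarith
  have hc2 : t * R ^ 2 / (2 * (t - s)) ≤ c := by
    apply div_le_div_of_nonneg_left (by positivity) (by positivity)
    have := min_le_right s (t - s); linarith
  -- slab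
  set slab : ℝ → Set E := fun ρ => {v : E | |⟪v, ν⟫| ≤ c * ρ} ∩ Metric.ball 0 R with hslab
  -- interior ball in Ω_s
  have hballΩ : Metric.ball z t ⊆ Ω := by
    apply ball_subset_of_open hΩopen hz
    rw [← hu z, huz]
  have hball : Metric.ball z (t - s) ⊆ {w : E | w ∈ Ω ∧ s < u w} := by
    intro w hw
    have hwz : dist w z < t - s := Metric.mem_ball.1 hw
    refine ⟨hballΩ (Metric.mem_ball.1 (by rw [Metric.mem_ball]; linarith)), ?_⟩
    have h1 : Metric.infDist z (frontier Ω) ≤ Metric.infDist w (frontier Ω) + dist z w :=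
      Metric.infDist_le_infDist_add_dist
    rw [hu, ← hu z] at *
    rw [dist_comm] at hwz
    linarith [hu w ▸ h1, huz ▸ h1]
  -- exterior ball
  have hext : ∀ w : E, w ∈ Ω → s < u w → s < ‖w - x‖ := by
    intro w hwΩ hws
    have := Metric.infDist_le_dist_of_mem hx (x := w)
    rw [← hu w, dist_eq_norm] at this
    linarith
  -- geometry of y
  have hyx : y - x = (s / t) • ν := by rw [hy]; abel
  have hzy : z - y = ((t - s) / t) • ν := by
    rw [hy, hν]
    rw [show x + (s / t) • (z - x) = x + (s/t) • (z-x) from rfl]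
    have : z - (x + (s / t) • (z - x)) = (1 - s / t) • (z - x) := by
      rw [sub_smul, one_smul]; abel
    rw [this]
    congr 1
    field_simp
  -- half space rewrite
  have hH : ∀ v : E, ⟪v, x - z⟫ = -⟪v, ν⟫ := by
    intro v
    rw [hν, show x - z = -(z - x) by abel, inner_neg_right]
  -- main inclusion
  have hincl : ∀ ρ : ℝ, 0 < ρ →
      (((fun w => ρ⁻¹ • (w - y)) '' {w | w ∈ Ω ∧ s < u w}) ∆
          {w : E | ⟪w, x - z⟫ < 0}) ∩ Metric.ball 0 R ⊆ slab ρ := by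
    intro ρ hρ v hv
    obtain ⟨hvsd, hvball⟩ := hv
    have hvR : ‖v‖ < R := by simpa [dist_eq_norm] using Metric.mem_ball.1 hvball
    have hvR2 : ‖v‖ ^ 2 ≤ R ^ 2 := by nlinarith [norm_nonneg v]
    refine ⟨?_, hvball⟩
    rw [Set.mem_symmDiff] at hvsd
    rcases hvsd with ⟨⟨w, hw, hwv⟩, hvH⟩ | ⟨hvH, hvnim⟩
    · -- v in blow-up, not in half space : inner v ν ≤ 0 and lower bound
      have hIneg : ⟪v, ν⟫ ≤ 0 := by
        have : ¬ ⟪v, x - z⟫ < 0 := hvH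
        rw [hH v] at this; linarith
      have hwx : s < ‖w - x‖ := hext w hw.1 hw.2
      have hweq : w - x = (s / t) • ν + ρ • v := by
        have : w = y + ρ • v := by
          rw [← hwv, smul_smul, mul_inv_cancel₀ (ne_of_gt hρ), one_smul]; abel
        rw [this, ← hyx]; abel
      have hsq : s ^ 2 < ‖(s / t) • ν + ρ • v‖ ^ 2 := by
        rw [hweq] at hwx
        nlinarith [norm_nonneg ((s / t) • ν + ρ • v)]
      rw [expand_sq, hνnorm] at hsq
      have hst2 : (s / t) ^ 2 * t ^ 2 = s ^ 2 := by field_simp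
      rw [hst2] at hsq
      -- hsq : s^2 < s^2 + 2*(s/t*ρ)*⟪ν,v⟫ + ρ^2 ‖v‖^2
      have hkey : 2 * (s / t * ρ) * ⟪ν, v⟫ + ρ ^ 2 * ‖v‖ ^ 2 > 0 := by linarith
      have hkey2 : 0 < 2 * s * ⟪ν, v⟫ + ρ * t * ‖v‖ ^ 2 := by
        have h := mul_pos (div_pos ht hρ) hkey
        have heq : t / ρ * (2 * (s / t * ρ) * ⟪ν, v⟫ + ρ ^ 2 * ‖v‖ ^ 2)
            = 2 * s * ⟪ν, v⟫ + ρ * t * ‖v‖ ^ 2 := by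
          field_simp
        rwa [heq] at h
      have hN : ρ * t * ‖v‖ ^ 2 ≤ ρ * t * R ^ 2 :=
        mul_le_mul_of_nonneg_left hvR2 (by positivity)
      have hI : -(t * R ^ 2 / (2 * s) * ρ) ≤ ⟪ν, v⟫ := by
        rw [show -(t * R ^ 2 / (2 * s) * ρ) = (-(ρ * t * R ^ 2)) / (2 * s) by ring,
          div_le_iff₀ (by positivity : (0:ℝ) < 2 * s)]
        linarith
      rw [real_inner_comm] at hI
      rw [Set.mem_setOf_eq, abs_le]
      constructor
      · apply le_trans _ hI
        rw [neg_le_neg_iff]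
        exact mul_le_mul_of_nonneg_right hc1 hρ.le
      · exact hIneg.trans (by positivity)
    · -- v in half space, not in blow-up
      have hIpos : 0 < ⟪v, ν⟫ := by
        have : ⟪v, x - z⟫ < 0 := hvH
        rw [hH v] at this; linarith
      have hwnot : y + ρ • v ∉ {w : E | w ∈ Ω ∧ s < u w} := by
        intro hmem
        exact hvnim ⟨y + ρ • v, hmem, by
          show ρ⁻¹ • (y + ρ • v - y) = v
          rw [add_sub_cancel_left, smul_smul, inv_mul_cancel₀ (ne_of_gt hρ), one_smul]⟩
      have hdist : t - s ≤ ‖(y + ρ • v) - z‖ := by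
        by_contra h
        push_neg at h
        exact hwnot (hball (Metric.mem_ball.1 (by rw [Metric.mem_ball, dist_eq_norm]; linarith)))
      have hweq : (y + ρ • v) - z = (-(( t - s) / t)) • ν + ρ • v := by
        rw [neg_smul, ← hzy]; abel
      rw [hweq] at hdist
      have hsq : (t - s) ^ 2 ≤ ‖(-((t - s) / t)) • ν + ρ • v‖ ^ 2 := by
        nlinarith [norm_nonneg ((-((t - s) / t)) • ν + ρ • v)]
      rw [expand_sq, hνnorm] at hsq
      have hst2 : (-((t - s) / t)) ^ 2 * t ^ 2 = (t - s) ^ 2 := by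
        field_simp
      rw [hst2] at hsq
      have hkey : 0 ≤ 2 * (-((t - s) / t) * ρ) * ⟪ν, v⟫ + ρ ^ 2 * ‖v‖ ^ 2 := by linarith
      have hkey2 : 2 * (t - s) * ⟪ν, v⟫ ≤ ρ * t * ‖v‖ ^ 2 := by
        have h := mul_nonneg (le_of_lt (div_pos ht hρ)) hkey
        have heq : t / ρ * (2 * (-((t - s) / t) * ρ) * ⟪ν, v⟫ + ρ ^ 2 * ‖v‖ ^ 2)
            = ρ * t * ‖v‖ ^ 2 - 2 * (t - s) * ⟪ν, v⟫ := by
          field_simp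
          ring
        rw [heq] at h
        linarith
      have hN : ρ * t * ‖v‖ ^ 2 ≤ ρ * t * R ^ 2 :=
        mul_le_mul_of_nonneg_left hvR2 (by positivity)
      have hI : ⟪ν, v⟫ ≤ t * R ^ 2 / (2 * (t - s)) * ρ := by
        rw [show t * R ^ 2 / (2 * (t - s)) * ρ = (ρ * t * R ^ 2) / (2 * (t - s)) by ring,
          le_div_iff₀ (by positivity : (0:ℝ) < 2 * (t - s))]
        linarith
      rw [real_inner_comm] at hI
      rw [Set.mem_setOf_eq, abs_le]
      constructor
      · have : (0:ℝ) ≤ c * ρ := by positivity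
        linarith
      · exact hI.trans (mul_le_mul_of_nonneg_right hc2 hρ.le)
  -- measurability & monotonicity of slab
  have hslabmeas : ∀ r : ℝ, MeasurableSet (slab r) := by
    intro r
    apply MeasurableSet.inter _ measurableSet_ball
    have hcont : Continuous fun v : E => |⟪v, ν⟫| :=
      (continuous_id.inner continuous_const).abs
    exact (isClosed_le hcont continuous_const).measurableSet
  have hslabmono : ∀ i j : ℝ, 0 < i → i ≤ j → slab i ⊆ slab j := by
    intro i j hi hij v hv
    refine ⟨hv.1.trans (by nlinarith : c * i ≤ c * j), hv.2⟩
  have hslabfin : ∃ r > (0:ℝ), volume (slab r) ≠ ⊤ := by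
    refine ⟨1, one_pos, ?_⟩
    exact ((measure_mono inter_subset_right).trans_lt measure_ball_lt_top).ne
  -- the intersection has measure zero
  have hker : volume (⋂ r > (0:ℝ), slab r) = 0 := by
    have hsub : (⋂ r > (0:ℝ), slab r) ⊆
        (LinearMap.ker (innerSL ℝ ν).toLinearMap : Submodule ℝ E) := by
      intro v hv
      simp only [Set.mem_iInter] at hv
      have habs : |⟪v, ν⟫| ≤ 0 := by
        by_contra h
        push_neg at h
        have hr : 0 < |⟪v, ν⟫| / (2 * c) := by positivity
        have := (hv _ hr).1
        rw [Set.mem_setOf_eq] at this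
        have h2 : c * (|⟪v, ν⟫| / (2 * c)) = |⟪v, ν⟫| / 2 := by
          field_simp
        rw [h2] at this
        linarith
      have hzero : ⟪v, ν⟫ = 0 := abs_nonpos_iff.mp (by linarith [abs_nonneg (⟪v, ν⟫)])
      have : ⟪ν, v⟫ = 0 := by rw [real_inner_comm]; exact hzero
      exact LinearMap.mem_ker.2 (by simpa using this)
    refine le_antisymm ?_ zero_le
    calc volume (⋂ r > (0:ℝ), slab r) ≤ volume ((LinearMap.ker (innerSL ℝ ν).toLinearMap : Submodule ℝ E) : Set E) :=
          measure_mono hsub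
      _ = 0 := by
          apply Measure.addHaar_submodule
          intro h
          have : ν ∈ (LinearMap.ker (innerSL ℝ ν).toLinearMap) := h ▸ Submodule.mem_top
          rw [LinearMap.mem_ker] at this
          simp only [ContinuousLinearMap.coe_coe, innerSL_apply_apply] at this
          rw [real_inner_self_eq_norm_sq, hνnorm] at this
          nlinarith
  -- squeeze
  have hg : Tendsto (fun ρ => volume (slab ρ)) (nhdsWithin 0 (Set.Ioi 0)) (nhds 0) := by
    have := tendsto_measure_biInter_gt (μ := volume) (s := slab) (a := (0:ℝ))
      (fun r _ => (hslabmeas r).nullMeasurableSet) hslabmono hslabfin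
    rwa [hker] at this
  apply tendsto_of_tendsto_of_tendsto_of_le_of_le' tendsto_const_nhds hg
  · exact Filter.Eventually.of_forall fun ρ => zero_le
  · filter_upwards [self_mem_nhdsWithin] with ρ hρ
    exact measure_mono (hincl ρ hρ)
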